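/- Let X_1,...,X_t be i.i.d. random variables taking values in [0, 30/N] with mean μ_0 ≤ 1/√n, let X = Σ X_ℓ with μ = E[X] ≤ t/√n. If a ≥ N/2, N > 4t/n^{0.49}, and N√n/(30t) > n^{1/200}, then Pr[X > a] ≤ exp(−α N a log n) for some universal constant α > 0. -/

import Mathlib

open MeasureTheory ProbabilityTheory

/-- Independence transfers along a.e. equality. -/
lemma iIndepFun_of_ae_eq {Ω : Type} {mΩ : MeasurableSpace Ω} {μ : Measure Ω}
    {ι : Type} [Countable ι] {X Y : ι → Ω → ℝ}
    (h : iIndepFun X μ) (hae : ∀ i, X i =ᵐ[μ] Y i) :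
    iIndepFun Y μ := by
  classical
  rw [iIndepFun_iff] at h ⊢
  intro s f' hf'
  choose B hB hBeq using fun (i : s) => hf' i i.2
  set g : ι → Set Ω := fun i => if hi : i ∈ s then X i ⁻¹' B ⟨i, hi⟩ else ∅ with hg
  have hae' : ∀ i ∈ s, (f' i : Set Ω) =ᵐ[μ] g i := by
    intro i hi
    simp only [hg, dif_pos hi]
    rw [← hBeq ⟨i, hi⟩]
    filter_upwards [hae i] with ω hω
    exact (congrArg (fun y => y ∈ B ⟨i, hi⟩) hω).symm
  have h1 : μ (⋂ i ∈ s, f' i) = μ (⋂ i ∈ s, g i) := by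
    refine measure_congr ?_
    have hb : ∀ᵐ ω ∂μ, ∀ i, i ∈ s → (ω ∈ f' i ↔ ω ∈ g i) := by
      rw [ae_all_iff]
      intro i
      by_cases hi : i ∈ s
      · filter_upwards [hae' i hi] with ω h
        exact fun _ => iff_of_eq h
      · filter_upwards with ω
        exact fun h => absurd h hi
    filter_upwards [hb] with ω hω
    change (ω ∈ ⋂ i ∈ s, f' i) = (ω ∈ ⋂ i ∈ s, g i)
    rw [eq_iff_iff]
    simp only [Set.mem_iInter]
    exact ⟨fun hm i hi => (hω i hi).1 (hm i hi), fun hm i hi => (hω i hi).2 (hm i hi)⟩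
  have h2 : ∀ i ∈ s, μ (f' i) = μ (g i) := fun i hi => measure_congr (hae' i hi)
  rw [h1, Finset.prod_congr rfl h2]
  refine h s (fun i hi => ?_)
  refine ⟨B ⟨i, hi⟩, hB ⟨i, hi⟩, ?_⟩
  simp only [hg, dif_pos hi]

/-- Integrability of the exponential of a bounded random variable. -/
lemma integrable_exp_of_Icc {Ω : Type} {mΩ : MeasurableSpace Ω} {μ : Measure Ω}
    [IsProbabilityMeasure μ] {Y : Ω → ℝ} (hY : Measurable Y) {c l : ℝ} (hl : 0 ≤ l)
    (hb : ∀ᵐ ω ∂μ, Y ω ∈ Set.Icc 0 c) :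
    Integrable (fun ω => Real.exp (l * Y ω)) μ := by
  refine Integrable.mono' (integrable_const (Real.exp (l * c)))
    ((hY.const_mul l).exp).aestronglyMeasurable ?_
  filter_upwards [hb] with ω h
  rw [Real.norm_eq_abs, abs_of_pos (Real.exp_pos _)]
  exact Real.exp_le_exp.2 (mul_le_mul_of_nonneg_left h.2 hl)

/-- mgf bound for a `[0,c]`-valued random variable. -/
lemma mgf_le_of_Icc {Ω : Type} {mΩ : MeasurableSpace Ω} {μ : Measure Ω}
    [IsProbabilityMeasure μ] {Y : Ω → ℝ} (hY : Measurable Y) {c l : ℝ}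
    (hc : 0 < c) (hl : 0 ≤ l) (hb : ∀ᵐ ω ∂μ, Y ω ∈ Set.Icc 0 c) :
    mgf Y μ l ≤ Real.exp ((∫ ω, Y ω ∂μ) * (Real.exp (l * c) - 1) / c) := by
  have hInt : Integrable Y μ := by
    refine Integrable.mono' (integrable_const c) hY.aestronglyMeasurable ?_
    filter_upwards [hb] with ω h
    rw [Real.norm_eq_abs, abs_of_nonneg h.1]; exact h.2
  have hpt : ∀ᵐ ω ∂μ, Real.exp (l * Y ω) ≤ 1 + Y ω * (Real.exp (l * c) - 1) / c := by
    filter_upwards [hb] with ω h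
    have h1 : 0 ≤ Y ω / c := div_nonneg h.1 hc.le
    have h2 : Y ω / c ≤ 1 := (div_le_one hc).2 h.2
    have hcv := convexOn_exp.2 (Set.mem_univ (0 : ℝ)) (Set.mem_univ (l * c))
      (by linarith : (0:ℝ) ≤ 1 - Y ω / c) h1 (by ring)
    simp only [smul_eq_mul, mul_zero, zero_add, Real.exp_zero, mul_one] at hcv
    have harg : Y ω / c * (l * c) = l * Y ω := by field_simp
    rw [harg] at hcv
    have hring : (1 - Y ω / c) + Y ω / c * Real.exp (l * c)
        = 1 + Y ω * (Real.exp (l * c) - 1) / c := by field_simp; ring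
    linarith
  have hIntExp := integrable_exp_of_Icc hY hl hb
  have hIntRHS : Integrable (fun ω => 1 + Y ω * (Real.exp (l * c) - 1) / c) μ := by
    simpa [mul_div_assoc] using
      (integrable_const (1:ℝ)).add (hInt.mul_const ((Real.exp (l * c) - 1) / c))
  calc mgf Y μ l = ∫ ω, Real.exp (l * Y ω) ∂μ := rfl
    _ ≤ ∫ ω, (1 + Y ω * (Real.exp (l * c) - 1) / c) ∂μ :=
        integral_mono_ae hIntExp hIntRHS hpt
    _ = 1 + (∫ ω, Y ω ∂μ) * (Real.exp (l * c) - 1) / c := by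
        rw [integral_add (integrable_const 1)
          (by simpa [mul_div_assoc] using hInt.mul_const ((Real.exp (l * c) - 1) / c))]
        simp [mul_div_assoc, integral_mul_const]
    _ ≤ Real.exp ((∫ ω, Y ω ∂μ) * (Real.exp (l * c) - 1) / c) := by
        have := Real.add_one_le_exp ((∫ ω, Y ω ∂μ) * (Real.exp (l * c) - 1) / c)
        linarith

set_option maxHeartbeats 1000000 in
/-- Chernoff tail bound used in the memory lower bound: there is a universal constant
`α > 0` such that for any i.i.d. random variables `X₁, …, X_t` with values in `[0, 30/N]`
and mean at most `1/√n`, if `a ≥ N/2`, `N > 4t/n^{0.49}`, and `N√n/(30t) > n^{1/200}`,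
then `Pr[∑ Xₗ > a] ≤ exp(−α N a log n)`. -/
theorem chernoff_tail_bound :
    ∃ α : ℝ, 0 < α ∧
      ∀ (Ω : Type) (mΩ : MeasurableSpace Ω) (μ : Measure Ω),
        IsProbabilityMeasure μ →
        ∀ (t n : ℕ) (N : ℝ) (X : Fin t → Ω → ℝ),
        iIndepFun X μ →
        (∀ i j, IdentDistrib (X i) (X j) μ μ) →
        (∀ i, ∀ᵐ ω ∂μ, X i ω ∈ Set.Icc (0 : ℝ) (30 / N)) →
        (∀ i, (∫ ω, X i ω ∂μ) ≤ 1 / Real.sqrt n) →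
        ∀ a : ℝ, N / 2 ≤ a →
          4 * t / (n : ℝ) ^ ((49 : ℝ) / 100) < N →
          (n : ℝ) ^ ((1 : ℝ) / 200) < N * Real.sqrt n / (30 * t) →
          (μ {ω | a < ∑ ℓ, X ℓ ω}).toReal ≤ Real.exp (-α * N * a * Real.log n) := by
  refine ⟨1/6000, by norm_num, ?_⟩
  intro Ω mΩ μ hprob t n N X hindep hid hbound hmean a ha h2 h3
  -- basic positivity facts
  have hN : 0 < N := lt_of_le_of_lt (by positivity) h2
  have ha0 : 0 < a := lt_of_lt_of_le (by linarith) ha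
  -- trivial case t = 0
  rcases Nat.eq_zero_or_pos t with ht0 | ht0
  · subst ht0
    have : {ω : Ω | a < ∑ ℓ : Fin 0, X ℓ ω} = ∅ := by
      ext ω; simp [not_lt.2 ha0.le, ha0.not_gt]
    rw [this]
    simp [Real.exp_nonneg]
  -- n ≥ 1
  rcases Nat.eq_zero_or_pos n with hn0 | hn0
  · subst hn0
    simp only [Nat.cast_zero, Real.sqrt_zero, mul_zero, zero_div] at h3
    rw [Real.zero_rpow (by norm_num)] at h3
    exact absurd h3 (lt_irrefl 0)
  have hn1 : (1 : ℝ) ≤ (n : ℝ) := by exact_mod_cast hn0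
  have hsn : 0 < Real.sqrt n := Real.sqrt_pos.2 (by exact_mod_cast hn0)
  have ht : (0 : ℝ) < (t : ℝ) := by exact_mod_cast ht0
  have hlogn : 0 ≤ Real.log n := Real.log_nonneg hn1
  -- measurable modifications of the X i
  have hXm : ∀ i, AEMeasurable (X i) μ := fun i => (hid i i).aemeasurable_fst
  set X' : Fin t → Ω → ℝ := fun i => (hXm i).mk (X i) with hX'def
  have heq : ∀ i, X i =ᵐ[μ] X' i := fun i => (hXm i).ae_eq_mk
  have hmeas' : ∀ i, Measurable (X' i) := fun i => (hXm i).measurable_mk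
  have hindep' : iIndepFun X' μ := iIndepFun_of_ae_eq hindep heq
  have hbound' : ∀ i, ∀ᵐ ω ∂μ, X' i ω ∈ Set.Icc (0 : ℝ) (30 / N) := by
    intro i
    filter_upwards [hbound i, heq i] with ω h1 h2
    rwa [← h2]
  have hmean' : ∀ i, (∫ ω, X' i ω ∂μ) ≤ 1 / Real.sqrt n := by
    intro i
    rw [← integral_congr_ae (heq i)]
    exact hmean i
  -- key constants
  set c : ℝ := 30 / N with hcdef
  have hc : 0 < c := by positivity
  set R : ℝ := N * Real.sqrt n / (2 * t) with hRdef
  have hR15 : 15 * (n : ℝ) ^ ((1 : ℝ) / 200) < R := by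
    have : R = 15 * (N * Real.sqrt n / (30 * t)) := by
      rw [hRdef]; field_simp; ring
    rw [this]
    have := mul_lt_mul_of_pos_left h3 (show (0:ℝ) < 15 by norm_num)
    linarith
  have hrpow1 : (1 : ℝ) ≤ (n : ℝ) ^ ((1 : ℝ) / 200) :=
    Real.one_le_rpow hn1 (by norm_num)
  have hR1 : (1 : ℝ) < R := by nlinarith
  have hR0 : (0 : ℝ) < R := by linarith
  have hlogR : 1 + (1 / 200) * Real.log n ≤ Real.log R := by
    have hlog15 : (1 : ℝ) ≤ Real.log 15 := by
      rw [Real.le_log_iff_exp_le (by norm_num)]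
      have := Real.exp_one_lt_d9
      linarith
    have hmono : Real.log (15 * (n : ℝ) ^ ((1 : ℝ) / 200)) ≤ Real.log R :=
      Real.log_le_log (by positivity) hR15.le
    rw [Real.log_mul (by norm_num) (by positivity),
      Real.log_rpow (by exact_mod_cast hn0)] at hmono
    linarith
  set l : ℝ := N / 30 * Real.log R with hldef
  have hlogR0 : 0 < Real.log R := Real.log_pos hR1
  have hl : 0 ≤ l := by positivity
  have hlc : l * c = Real.log R := by
    rw [hldef, hcdef]; field_simp
  have hexplc : Real.exp (l * c) = R := by rw [hlc, Real.exp_log hR0]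
  -- integrability
  have hint : ∀ i, Integrable (fun ω => Real.exp (l * X' i ω)) μ :=
    fun i => integrable_exp_of_Icc (hmeas' i) hl (hbound' i)
  have hintsum : Integrable (fun ω => Real.exp (l * (∑ i, X' i) ω)) μ :=
    hindep'.integrable_exp_mul_sum hmeas' (fun i _ => hint i)
  -- per-variable mgf bound
  set K : ℝ := 1 / Real.sqrt n * (R - 1) / c with hKdef
  have hmgf : ∀ i, mgf (X' i) μ l ≤ Real.exp K := by
    intro i
    refine (mgf_le_of_Icc (hmeas' i) hc hl (hbound' i)).trans ?_
    rw [Real.exp_le_exp, hexplc, hKdef]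
    exact (div_le_div_iff_of_pos_right hc).2
      (mul_le_mul_of_nonneg_right (hmean' i) (by linarith))
  -- Chernoff
  have hsetswap : (μ {ω | a < ∑ ℓ, X ℓ ω}) = μ {ω | a < ∑ ℓ, X' ℓ ω} := by
    refine measure_congr ?_
    have hb : ∀ᵐ ω ∂μ, ∀ i, X i ω = X' i ω := ae_all_iff.2 heq
    filter_upwards [hb] with ω hω
    change (a < ∑ ℓ, X ℓ ω) = (a < ∑ ℓ, X' ℓ ω)
    have hsum : ∑ ℓ, X ℓ ω = ∑ ℓ, X' ℓ ω := Finset.sum_congr rfl (fun i _ => hω i)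
    rw [hsum]
  have hsubset : (μ {ω | a < ∑ ℓ, X' ℓ ω}).toReal
      ≤ (μ {ω | a ≤ (∑ ℓ, X' ℓ) ω}).toReal := by
    refine ENNReal.toReal_mono (measure_ne_top μ _) (measure_mono ?_)
    intro ω hω
    simp only [Set.mem_setOf_eq, Finset.sum_apply] at *
    exact hω.le
  have hchern := measure_ge_le_exp_mul_mgf (X := ∑ i, X' i) (μ := μ) a hl hintsum
  have hmgfsum : mgf (∑ i, X' i) μ l = ∏ i, mgf (X' i) μ l :=
    hindep'.mgf_sum hmeas' Finset.univ
  have hprod : ∏ i, mgf (X' i) μ l ≤ Real.exp ((t : ℝ) * K) := by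
    calc ∏ i, mgf (X' i) μ l ≤ ∏ _i : Fin t, Real.exp K :=
          Finset.prod_le_prod (fun i _ => mgf_nonneg) (fun i _ => hmgf i)
      _ = Real.exp K ^ t := by simp
      _ = Real.exp ((t : ℝ) * K) := (Real.exp_nat_mul K t).symm
  -- final arithmetic
  have htK : (t : ℝ) * K ≤ N * a / 30 := by
    have hK2 : K ≤ 1 / Real.sqrt n * R / c := by
      rw [hKdef]
      exact (div_le_div_iff_of_pos_right hc).2
        (mul_le_mul_of_nonneg_left (by linarith) (by positivity))
    have htK2 : (t : ℝ) * (1 / Real.sqrt n * R / c) = N ^ 2 / 60 := by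
      rw [hRdef, hcdef]
      field_simp
      ring
    have : (t : ℝ) * K ≤ (t : ℝ) * (1 / Real.sqrt n * R / c) := by
      exact mul_le_mul_of_nonneg_left hK2 ht.le
    rw [htK2] at this
    nlinarith
  have hexpineq : -l * a + (t : ℝ) * K ≤ -(1/6000) * N * a * Real.log n := by
    have hNa : 0 ≤ N * a / 30 := by positivity
    have hmul := mul_le_mul_of_nonneg_left hlogR hNa
    rw [hldef]
    nlinarith
  calc (μ {ω | a < ∑ ℓ, X ℓ ω}).toReal
      = (μ {ω | a < ∑ ℓ, X' ℓ ω}).toReal := by rw [hsetswap]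
    _ ≤ (μ {ω | a ≤ (∑ ℓ, X' ℓ) ω}).toReal := hsubset
    _ ≤ Real.exp (-l * a) * mgf (∑ i, X' i) μ l := hchern
    _ ≤ Real.exp (-l * a) * Real.exp ((t : ℝ) * K) := by
        rw [hmgfsum]
        exact mul_le_mul_of_nonneg_left hprod (Real.exp_nonneg _)
    _ = Real.exp (-l * a + (t : ℝ) * K) := (Real.exp_add _ _).symm
    _ ≤ Real.exp (-(1/6000) * N * a * Real.log n) := Real.exp_le_exp.2 hexpineq
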